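/- Let u be the one-sided fixed point of the Fibonacci substitution S(a)=ab, S(b)=a, and let Ω be the associated subshift, i.e., the set of (one-sided) infinite sequences over {a,b} all of whose finite subwords occur in u. Call a finite subword w of u repeatable if the bi-infinite periodic sequence with unit cell w is a shift of the bi-infinite periodic sequence with unit cell u₀u₁⋯u_{|w|−1}. Then for each ω ∈ Ω there exists a strictly increasing subsequence (F_{k_i}) of the Fibonacci numbers such that each prefix ω₀ω₁⋯ω_{F_{k_i}−1} of ω of length F_{k_i} is a subword of u and is repeatable. -/

import Mathlib

/-- The Fibonacci substitution words `S^k(a)` over the alphabet `{a, b}`, with `a = true`,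
`b = false`: `S^0(a) = a`, `S^1(a) = ab`, `S^{k+2}(a) = S^{k+1}(a) S^k(a)`.
Thus `fibWord (k-1)` is the word `W_k = S^{k-1}(a)`, of length `F_k`. -/
def fibWord : ℕ → List Bool
  | 0 => [true]
  | 1 => [true, false]
  | (k + 2) => fibWord (k + 1) ++ fibWord k

/-- The one-sided infinite fixed point `u = abaababaabaab…` of the Fibonacci substitution;
`fibWord (n + 2)` has length `> n` and all the words `fibWord k` are nested prefixes, so
this gives the `n`-th letter of `u`. -/
def uSeq (n : ℕ) : Bool := (fibWord (n + 2)).getD n true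

/-- `w` is a (finite) subword of `u`, i.e. a block of consecutive letters of `u`. -/
def subwordOfU (w : List Bool) : Prop :=
  ∃ i : ℕ, w = (List.range w.length).map fun j => uSeq (i + j)

/-- The bi-infinite periodic sequence with unit cell `w`. -/
def periodize (w : List Bool) (n : ℤ) : Bool :=
  w.getD (n % (w.length : ℤ)).toNat true

/-- `w` is repeatable: the bi-infinite periodic sequence with unit cell `w` is a shift of
the bi-infinite periodic sequence with unit cell `u₀u₁⋯u_{|w|−1}`. -/
def Repeatable (w : List Bool) : Prop :=
  ∃ s : ℤ, ∀ n : ℤ,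
    periodize w n = periodize ((List.range w.length).map uSeq) (n + s)

open List Nat

lemma fib_rec (n : ℕ) : fib (n + 2) = fib (n + 1) + fib n := by
  rw [fib_add_two, Nat.add_comm]

lemma fibWord_length : ∀ k, (fibWord k).length = fib (k + 2)
  | 0 => rfl
  | 1 => rfl
  | (k+2) => by
      rw [fibWord, List.length_append, fibWord_length (k+1), fibWord_length k,
        show k+2+2 = (k+2)+2 from rfl, fib_rec (k+2), show k+2+1 = (k+1)+2 from rfl]

lemma fib_pos' (k : ℕ) : 0 < fib (k + 2) := fib_pos.2 (by omega)

lemma fibWord_prefix_succ : ∀ k, fibWord k <+: fibWord (k + 1)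
  | 0 => ⟨[false], rfl⟩
  | (k+1) => ⟨fibWord k, rfl⟩

lemma fibWord_prefix {k l : ℕ} (h : k ≤ l) : fibWord k <+: fibWord l := by
  induction l with
  | zero => rw [Nat.le_zero.1 h]
  | succ n ih =>
      rcases Nat.lt_or_ge k (n+1) with h'|h'
      · exact (ih (by omega)).trans (fibWord_prefix_succ n)
      · rw [show k = n + 1 by omega]

lemma getD_of_prefix {w v : List Bool} (h : w <+: v) {n : ℕ} (hn : n < w.length) :
    v.getD n true = w.getD n true := by
  obtain ⟨t, rfl⟩ := h
  rw [List.getD_append _ _ _ _ hn]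

lemma self_lt_fib (n : ℕ) : n < fib (n + 2) := by
  induction n with
  | zero => simp
  | succ m ih =>
      rw [show m + 1 + 2 = m + 3 from rfl]
      have h2 : fib (m + 3) = fib (m + 2) + fib (m + 1) := fib_rec (m+1)
      have : 0 < fib (m+1) := fib_pos.2 (by omega)
      omega

lemma lt_fibWord_len (n k : ℕ) (h : n < fib (k+2)) : n < (fibWord k).length := by
  rw [fibWord_length]; exact h

lemma fib_rec' (n : ℕ) : fib (n + 3) = fib (n + 2) + fib (n + 1) := fib_rec (n + 1)

/-- `uSeq` agrees with `fibWord k` below its length. -/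
lemma uSeq_eq_fibWord {k n : ℕ} (hn : n < fib (k + 2)) :
    uSeq n = (fibWord k).getD n true := by
  unfold uSeq
  rcases Nat.le_total (n + 2) k with h | h
  · refine (getD_of_prefix (fibWord_prefix h) ?_).symm
    exact lt_fibWord_len _ _ (lt_of_lt_of_le (self_lt_fib n) (fib_mono (by omega)))
  · exact getD_of_prefix (fibWord_prefix h) (lt_fibWord_len _ _ hn)

/-- One letter image under the substitution. -/
def sBlock (c : Bool) : List Bool := if c then [true, false] else [true]

/-- The substitution on words. -/
def listS (w : List Bool) : List Bool := w.flatMap sBlock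

lemma listS_nil : listS [] = [] := rfl
lemma listS_cons (c : Bool) (w : List Bool) : listS (c :: w) = sBlock c ++ listS w := rfl
lemma listS_append (w v : List Bool) : listS (w ++ v) = listS w ++ listS v := by
  simp [listS]

lemma listS_fibWord : ∀ k, listS (fibWord k) = fibWord (k + 1)
  | 0 => rfl
  | 1 => rfl
  | (k+2) => by
      rw [fibWord, listS_append, listS_fibWord (k+1), listS_fibWord k]
      rfl

lemma sBlock_len_pos (c : Bool) : 0 < (sBlock c).length := by cases c <;> simp [sBlock]

/-- Position of the `j`-th block inside `listS w`. -/
def sPos (w : List Bool) (j : ℕ) : ℕ := (listS (w.take j)).length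

lemma sPos_succ (w : List Bool) (j : ℕ) (hj : j < w.length) :
    sPos w (j + 1) = sPos w j + (sBlock (w.getD j true)).length := by
  unfold sPos
  rw [← List.take_concat_get hj, List.concat_eq_append, listS_append, List.length_append]
  congr 2
  simp [listS, List.getD_eq_getElem?_getD, List.getElem?_eq_getElem hj]

lemma listS_getD (w : List Bool) (j t : ℕ) (hj : j < w.length)
    (ht : t < (sBlock (w.getD j true)).length) :
    (listS w).getD (sPos w j + t) true = (sBlock (w.getD j true)).getD t true := by
  induction w generalizing j with
  | nil => simp at hj
  | cons c w ih =>
      cases j with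
      | zero =>
          have : sPos (c :: w) 0 = 0 := rfl
          rw [this, Nat.zero_add, listS_cons, List.getD_append _ _ _ _ (by simpa using ht)]
          rfl
      | succ j =>
          have hspos : sPos (c :: w) (j+1) = (sBlock c).length + sPos w j := by
            unfold sPos
            rw [List.take_succ_cons, listS_cons, List.length_append]
          have hj' : j < w.length := by simpa using hj
          have hgd : (c :: w).getD (j+1) true = w.getD j true := rfl
          rw [hgd] at ht ⊢
          rw [hspos, listS_cons, Nat.add_assoc,
            List.getD_append_right _ _ _ _ (by omega), Nat.add_sub_cancel_left]
          exact ih j hj' ht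

/-- Start position of the `j`-th block in the level-`m` decomposition of `u`
(blocks are `fibWord (m+1)` for letter `a` and `fibWord m` for letter `b`). -/
def bstart (m : ℕ) : ℕ → ℕ
  | 0 => 0
  | (j+1) => bstart m j + (if uSeq j then fib (m+3) else fib (m+2))

lemma sPos_mono (w : List Bool) {j l : ℕ} (h : j ≤ l) : sPos w j ≤ sPos w l := by
  unfold sPos
  obtain ⟨t, ht⟩ : w.take j <+: w.take l := List.take_prefix_take_left h
  rw [← ht, listS_append, List.length_append]
  omega

lemma sPos_le (w : List Bool) {j : ℕ} (h : j ≤ w.length) : sPos w j ≤ (listS w).length := by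
  have := sPos_mono w h
  unfold sPos at this
  rwa [List.take_length] at this

lemma sBlock_length (c : Bool) : (sBlock c).length = if c then fib 3 else fib 2 := by
  cases c <;> rfl

lemma bstart0_eq_sPos (K : ℕ) : ∀ j, j ≤ fib (K + 2) → bstart 0 j = sPos (fibWord K) j
  | 0, _ => rfl
  | (j+1), h => by
      rw [bstart, bstart0_eq_sPos K j (by omega),
        sPos_succ _ _ (lt_fibWord_len _ _ (by omega)),
        ← uSeq_eq_fibWord (k := K) (by omega), sBlock_length]

/-- Level-0 block decomposition of `u` : `u = S(u)`. -/
lemma BD0 (j t : ℕ) (ht : t < (sBlock (uSeq j)).length) :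
    uSeq (bstart 0 j + t) = (sBlock (uSeq j)).getD t true := by
  have hj : j < fib (j + 2) := self_lt_fib j
  have hjlen : j < (fibWord j).length := lt_fibWord_len _ _ hj
  have hb : bstart 0 j = sPos (fibWord j) j := bstart0_eq_sPos j j (by omega)
  have hgd : (fibWord j).getD j true = uSeq j := (uSeq_eq_fibWord hj).symm
  have hpos : sPos (fibWord j) j + t < (listS (fibWord j)).length := by
    have h1 := sPos_succ (fibWord j) j hjlen
    have h2 := sPos_le (fibWord j) (j := j+1) (by omega)
    rw [hgd] at h1
    omega
  have := listS_getD (fibWord j) j t hjlen (by rw [hgd]; exact ht)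
  rw [hgd] at this
  rw [hb, ← this, listS_fibWord]
  exact uSeq_eq_fibWord (k := j + 1) (by rw [← fibWord_length, ← listS_fibWord]; exact hpos)

lemma bstart_def (m j : ℕ) :
    bstart m (j + 1) = bstart m j + (if uSeq j then fib (m+3) else fib (m+2)) := rfl

lemma uSeq_bstart0 (j : ℕ) : uSeq (bstart 0 j) = true := by
  have h := BD0 j 0 (sBlock_len_pos _)
  rw [Nat.add_zero] at h
  rw [h]
  rcases Bool.dichotomy (uSeq j) with hj | hj <;> rw [hj] <;> rfl

lemma uSeq_bstart0_one (j : ℕ) (h : uSeq j = true) : uSeq (bstart 0 j + 1) = false := by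
  have h2 := BD0 j 1 (by rw [h]; simp [sBlock])
  rw [h] at h2
  rw [h2]
  rfl

lemma bstart_succ_level (m : ℕ) : ∀ j, bstart (m + 1) j = bstart m (bstart 0 j)
  | 0 => rfl
  | (j+1) => by
      rw [bstart_def, bstart_succ_level m j, bstart_def 0 j]
      rcases Bool.dichotomy (uSeq j) with hj | hj
      · rw [hj, if_neg (by simp), if_neg (by simp), show fib (0+2) = 1 from rfl,
          bstart_def, uSeq_bstart0 j, if_pos rfl]
      · rw [hj, if_pos rfl, if_pos rfl, show fib (0+3) = 2 from rfl,
          show bstart 0 j + 2 = (bstart 0 j + 1) + 1 from rfl,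
          bstart_def, bstart_def, uSeq_bstart0 j, uSeq_bstart0_one j hj,
          if_pos rfl, if_neg (by simp)]
        have e1 : fib (m+1+3) = fib (m+3) + fib (m+2) := fib_rec (m+2)
        omega

/-- Level-`m` block decomposition of `u`: blocks are `fibWord (m+1)` (letter `a`)
and `fibWord m` (letter `b`), in the pattern given by `u` itself. -/
lemma BD : ∀ m j t, t < (if uSeq j then fib (m+3) else fib (m+2)) →
    uSeq (bstart m j + t) = (if uSeq j then fibWord (m+1) else fibWord m).getD t true := by
  intro m
  induction m with
  | zero =>
      intro j t ht
      rcases Bool.dichotomy (uSeq j) with hj | hj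
      · rw [hj, if_neg (by simp)] at ht
        have h := BD0 j t (by rw [hj]; exact ht)
        rw [hj] at h
        rw [h, hj, if_neg (by simp)]
        rfl
      · rw [hj, if_pos rfl] at ht
        have h := BD0 j t (by rw [hj]; exact ht)
        rw [hj] at h
        rw [h, hj, if_pos rfl]
        rfl
  | succ m ih =>
      intro j t ht
      rw [bstart_succ_level]
      rcases Bool.dichotomy (uSeq j) with hj | hj
      · rw [hj, if_neg (by simp)] at ht
        rw [hj, if_neg (by simp)]
        have h := ih (bstart 0 j) t (by rw [uSeq_bstart0 j, if_pos rfl]; exact ht)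
        rw [uSeq_bstart0 j, if_pos rfl] at h
        exact h
      · rw [hj, if_pos rfl] at ht
        rw [hj, if_pos rfl]
        have hsplit : fib (m+1+3) = fib (m+3) + fib (m+2) := fib_rec (m+2)
        show uSeq (bstart m (bstart 0 j) + t) = (fibWord (m+1) ++ fibWord m).getD t true
        rcases Nat.lt_or_ge t (fib (m+3)) with h3 | h3
        · have h := ih (bstart 0 j) t (by rw [uSeq_bstart0 j, if_pos rfl]; exact h3)
          rw [uSeq_bstart0 j, if_pos rfl] at h
          rw [List.getD_append _ _ _ _ (lt_fibWord_len _ _ h3)]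
          exact h
        · have hb1 : bstart m (bstart 0 j + 1) = bstart m (bstart 0 j) + fib (m+3) := by
            rw [bstart_def, uSeq_bstart0 j, if_pos rfl]
          have ht'lt : t - fib (m+3) < fib (m+2) := by omega
          have h := ih (bstart 0 j + 1) (t - fib (m+3))
            (by rw [uSeq_bstart0_one j hj, if_neg (by simp)]; exact ht'lt)
          rw [uSeq_bstart0_one j hj, if_neg (by simp)] at h
          rw [List.getD_append_right _ _ _ _ (by rw [fibWord_length, show m+1+2 = m+3 from rfl]; omega)]
          rw [fibWord_length, show m+1+2 = m+3 from rfl]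
          rw [show bstart m (bstart 0 j) + t
              = bstart m (bstart 0 j) + fib (m+3) + (t - fib (m+3)) by omega, ← hb1]
          exact h

/-! ### Word combinatorics -/

lemma fibWord_ne_nil (k : ℕ) : fibWord k ≠ [] := by
  have h1 := fibWord_length k
  have h2 := fib_pos' k
  intro h
  rw [h] at h1
  simp [← h1] at h2

/-- `fibWord (k+1) ++ fibWord k` and `fibWord k ++ fibWord (k+1)` differ exactly in
their last two letters, which get swapped. -/
lemma swapLem : ∀ k : ℕ, ∃ (z : List Bool) (x y : Bool), x ≠ y ∧
    fibWord (k+1) ++ fibWord k = z ++ [x, y] ∧ fibWord k ++ fibWord (k+1) = z ++ [y, x]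
  | 0 => ⟨[true], false, true, by simp, rfl, rfl⟩
  | (k+1) => by
      obtain ⟨z, x, y, hxy, h1, h2⟩ := swapLem k
      refine ⟨fibWord (k+1) ++ z, y, x, hxy.symm, ?_, ?_⟩
      · rw [show k+1+1 = k+2 from rfl, fibWord]
        simp only [List.append_assoc]
        rw [h2]
      · rw [show k+1+1 = k+2 from rfl, fibWord]
        simp only [List.append_assoc]
        rw [h1]

/-- The last letter of `fibWord k`. -/
def lastLetter (k : ℕ) : Bool := (fibWord k).getD (fib (k+2) - 1) true

lemma lastLetter_step (k : ℕ) : lastLetter (k+2) = lastLetter k := by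
  unfold lastLetter
  rw [fibWord, List.getD_append_right _ _ _ _ (by
    rw [fibWord_length, show k+1+2 = k+3 from rfl]
    have h1 : fib (k+2+2) = fib (k+3) + fib (k+2) := fib_rec (k+2)
    have := fib_pos' k
    omega)]
  congr 1
  rw [fibWord_length, show k+1+2 = k+3 from rfl]
  have h1 : fib (k+2+2) = fib (k+3) + fib (k+2) := fib_rec (k+2)
  have := fib_pos' k
  omega

lemma lastLetter_alt : ∀ k : ℕ, lastLetter k = !lastLetter (k+1)
  | 0 => rfl
  | 1 => by rw [lastLetter_step 0]; rfl
  | (k+2) => by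
      rw [lastLetter_step k, lastLetter_step (k+1), lastLetter_alt k]

lemma getD_dropLast (w : List Bool) (n : ℕ) (h : n < w.length - 1) :
    w.dropLast.getD n true = w.getD n true := by
  rw [List.dropLast_eq_take]
  exact getD_of_prefix (List.take_prefix _ _) (by simpa using h) |>.symm

lemma Zlem (k v : ℕ) (hv : v < 2 * fib (k+4) + fib (k+3)) :
    (fibWord (k+2) ++ (fibWord (k+2) ++ fibWord (k+1))).getD v true
      = (fibWord (k+2)).getD (v % fib (k+4)) true := by
  have hP : (fibWord (k+2)).length = fib (k+4) := fibWord_length (k+2)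
  have hQ : (fibWord (k+1)).length = fib (k+3) := fibWord_length (k+1)
  have hqp : fib (k+3) ≤ fib (k+4) := fib_mono (by omega)
  rcases Nat.lt_or_ge v (fib (k+4)) with h1 | h1
  · rw [List.getD_append _ _ _ _ (by rw [hP]; omega), Nat.mod_eq_of_lt h1]
  · rw [List.getD_append_right _ _ _ _ (by rw [hP]; omega), hP]
    rcases Nat.lt_or_ge (v - fib (k+4)) (fib (k+4)) with h2 | h2
    · rw [List.getD_append _ _ _ _ (by rw [hP]; omega)]
      congr 1
      rw [Nat.mod_eq_sub_mod h1, Nat.mod_eq_of_lt h2]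
    · rw [List.getD_append_right _ _ _ _ (by rw [hP]; omega), hP]
      have hlt : v - fib (k+4) - fib (k+4) < fib (k+3) := by omega
      rw [show (fibWord (k+2)).getD (v % fib (k+4)) true
          = (fibWord (k+1)).getD (v % fib (k+4)) true from
        (getD_of_prefix (fibWord_prefix_succ (k+1))
          (by rw [hQ, Nat.mod_eq_sub_mod h1, Nat.mod_eq_sub_mod h2,
                Nat.mod_eq_of_lt (by omega)]; exact hlt))]
      congr 1
      rw [Nat.mod_eq_sub_mod h1, Nat.mod_eq_sub_mod h2, Nat.mod_eq_of_lt (by omega)]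

lemma U2low (k v : ℕ) (hv : v < 2 * fib (k+4) + fib (k+3) - 2) :
    (fibWord (k+2) ++ (fibWord (k+1) ++ fibWord (k+2))).getD v true
      = (fibWord (k+2)).getD (v % fib (k+4)) true := by
  have hP : (fibWord (k+2)).length = fib (k+4) := fibWord_length (k+2)
  have hQ : (fibWord (k+1)).length = fib (k+3) := fibWord_length (k+1)
  have hqpos := fib_pos' (k+1)
  have hppos := fib_pos' (k+2)
  obtain ⟨z, x, y, hxy, h1, h2⟩ := swapLem (k+1)
  have hz : z.length + 2 = fib (k+4) + fib (k+3) := by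
    have hlen := congrArg List.length h1
    rw [List.length_append, List.length_append] at hlen
    rw [show fibWord (k+1+1) = fibWord (k+2) from rfl, hP, hQ] at hlen
    simp at hlen
    omega
  rcases Nat.lt_or_ge v (fib (k+4)) with hc | hc
  · rw [List.getD_append _ _ _ _ (by rw [hP]; omega), Nat.mod_eq_of_lt hc]
  · have key : ∀ w : List Bool, (fibWord (k+2) ++ w).getD v true
        = w.getD (v - fib (k+4)) true := fun w =>
      (List.getD_append_right _ _ _ _ (by rw [hP]; omega)).trans (by rw [hP])
    rw [key, h2, List.getD_append _ _ _ _ (by omega)]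
    have hZ := Zlem k v (by omega)
    rw [key, h1, List.getD_append _ _ _ _ (by omega)] at hZ
    exact hZ

/-- The singular word of length `fib (k+4)`. -/
def Ysing (k : ℕ) : List Bool := lastLetter (k+1) :: (fibWord (k+2)).dropLast

lemma U2high (k s : ℕ) (hs : s < fib (k+4)) :
    (fibWord (k+2) ++ (fibWord (k+1) ++ fibWord (k+2))).getD
        (fib (k+4) + fib (k+3) - 1 + s) true
      = (Ysing k).getD s true := by
  have hP : (fibWord (k+2)).length = fib (k+4) := fibWord_length (k+2)
  have hQ : (fibWord (k+1)).length = fib (k+3) := fibWord_length (k+1)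
  have hqpos : 0 < fib (k+3) := fib_pos' (k+1)
  have hppos : 0 < fib (k+4) := fib_pos' (k+2)
  rw [List.getD_append_right _ _ _ _ (by rw [hP]; omega), hP]
  cases s with
  | zero =>
      rw [show fib (k+4) + fib (k+3) - 1 + 0 - fib (k+4) = fib (k+3) - 1 by omega]
      rw [List.getD_append _ _ _ _ (by rw [hQ]; omega)]
      rfl
  | succ s' =>
      rw [show fib (k+4) + fib (k+3) - 1 + (s'+1) - fib (k+4) = fib (k+3) + s' by omega]
      rw [List.getD_append_right _ _ _ _ (by rw [hQ]; omega), hQ,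
        Nat.add_sub_cancel_left]
      show (fibWord (k+2)).getD s' true = ((fibWord (k+2)).dropLast).getD s' true
      rw [getD_dropLast _ _ (by rw [hP]; omega)]

lemma exists_block (m i : ℕ) :
    ∃ j t, i = bstart m j + t ∧ t < (if uSeq j then fib (m+3) else fib (m+2)) := by
  induction i with
  | zero =>
      refine ⟨0, 0, rfl, ?_⟩
      rcases Bool.dichotomy (uSeq 0) with h | h
      · rw [h, if_neg (by simp)]; exact fib_pos' m
      · rw [h, if_pos rfl]; exact fib_pos' (m+1)
  | succ i ih =>
      obtain ⟨j, t, hi, ht⟩ := ih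
      rcases Nat.lt_or_ge (t+1) (if uSeq j then fib (m+3) else fib (m+2)) with h | h
      · exact ⟨j, t+1, by omega, h⟩
      · refine ⟨j+1, 0, ?_, ?_⟩
        · rw [bstart_def]; omega
        · rcases Bool.dichotomy (uSeq (j+1)) with h' | h' <;> rw [h']
          · rw [if_neg (by simp)]; exact fib_pos' m
          · rw [if_pos rfl]; exact fib_pos' (m+1)

lemma uSeq_next (j : ℕ) (h : uSeq j = false) : uSeq (j+1) = true := by
  obtain ⟨j', t, hj, ht⟩ := exists_block 0 j
  rcases Bool.dichotomy (uSeq j') with h' | h'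
  · rw [h', if_neg (by simp)] at ht
    have : t = 0 := by have := show fib (0+2) = 1 from rfl; omega
    rw [this, Nat.add_zero] at hj
    rw [hj, uSeq_bstart0 j'] at h
    exact absurd h (by simp)
  · rw [h', if_pos rfl] at ht
    have h2 : fib 3 = 2 := rfl
    interval_cases t
    · rw [Nat.add_zero] at hj
      rw [hj, uSeq_bstart0 j'] at h
      exact absurd h (by simp)
    · have : j + 1 = bstart 0 (j' + 1) := by
        rw [bstart_def, h', if_pos rfl, h2]; omega
      rw [this, uSeq_bstart0]

/-- Classification: every factor of `u` of length `fib (k+4)` is a cyclic rotation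
of `fibWord (k+2)` or is the singular word `Ysing k`. -/
lemma classify (k i : ℕ) :
    (∃ r < fib (k+4), ∀ s < fib (k+4),
        uSeq (i + s) = (fibWord (k+2)).getD ((r + s) % fib (k+4)) true)
    ∨ (∀ s < fib (k+4), uSeq (i + s) = (Ysing k).getD s true) := by
  have hP : (fibWord (k+2)).length = fib (k+4) := fibWord_length (k+2)
  have hQ : (fibWord (k+1)).length = fib (k+3) := fibWord_length (k+1)
  have hppos : 0 < fib (k+4) := fib_pos' (k+2)
  have hqpos : 0 < fib (k+3) := fib_pos' (k+1)
  have hsplit : fib (k+5) = fib (k+4) + fib (k+3) := fib_rec (k+3)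
  have h45 : fib (k+4) ≤ fib (k+5) := fib_mono (by omega)
  have h34 : fib (k+3) ≤ fib (k+4) := fib_mono (by omega)
  obtain ⟨j, t, hi, ht⟩ := exists_block (k+2) i
  -- the two bstart increments, with normalized indices
  have hbd : bstart (k+2) (j+1)
      = bstart (k+2) j + (if uSeq j then fib (k+5) else fib (k+4)) := bstart_def (k+2) j
  have hBD : ∀ j' t', (t' < if uSeq j' then fib (k+5) else fib (k+4)) →
      uSeq (bstart (k+2) j' + t')
        = (if uSeq j' then fibWord (k+3) else fibWord (k+2)).getD t' true := BD (k+2)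
  rcases Bool.dichotomy (uSeq j) with hj | hj
  · -- short block `fibWord (k+2)`, followed by a long block
    rw [hj, if_neg (by simp)] at ht hbd
    have ht' : t < fib (k+4) := ht
    left
    refine ⟨t, ht, fun s hs => ?_⟩
    rcases Nat.lt_or_ge (t + s) (fib (k+4)) with hc | hc
    · have h := hBD j (t+s) (by rw [hj, if_neg (by simp)]; exact hc)
      rw [hj, if_neg (by simp)] at h
      rw [hi, Nat.add_assoc, h, Nat.mod_eq_of_lt hc]
    · have hnext : uSeq (j+1) = true := uSeq_next j hj
      have h := hBD (j+1) (t+s-fib (k+4))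
        (by rw [hnext, if_pos rfl]; omega)
      rw [hnext, if_pos rfl] at h
      have hidx : i + s = bstart (k+2) (j+1) + (t + s - fib (k+4)) := by
        rw [hbd]; omega
      rw [hidx, h, getD_of_prefix (fibWord_prefix_succ (k+2)) (by rw [hP]; omega)]
      congr 1
      rw [Nat.mod_eq_sub_mod hc, Nat.mod_eq_of_lt (by omega)]
  · -- long block `fibWord (k+3) = P ++ Q`
    rw [hj, if_pos rfl] at ht hbd
    have ht' : t < fib (k+5) := ht
    -- the content of u on [bstart, bstart + 2p + q) is U2 = P ++ (Q ++ P)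
    have hcontent : ∀ v, v < 2 * fib (k+4) + fib (k+3) →
        uSeq (bstart (k+2) j + v)
          = (fibWord (k+2) ++ (fibWord (k+1) ++ fibWord (k+2))).getD v true := by
      intro v hv
      rcases Nat.lt_or_ge v (fib (k+5)) with hc | hc
      · have h := hBD j v (by rw [hj, if_pos rfl]; exact hc)
        rw [hj, if_pos rfl] at h
        rw [h]
        -- fibWord (k+3) = P ++ Q
        rw [show fibWord (k+3) = fibWord (k+2) ++ fibWord (k+1) from rfl]
        rcases Nat.lt_or_ge v (fib (k+4)) with hd | hd
        · rw [List.getD_append _ _ _ _ (by rw [hP]; omega),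
            List.getD_append _ _ _ _ (by rw [hP]; omega)]
        · rw [List.getD_append_right _ _ _ _ (by rw [hP]; omega),
            List.getD_append_right _ _ _ _ (by rw [hP]; omega), hP,
            List.getD_append _ _ _ _ (by rw [hQ]; omega)]
      · -- in the following block, whose first p letters are P
        have hv' : v - fib (k+5) < fib (k+4) := by omega
        have hidx : bstart (k+2) j + v = bstart (k+2) (j+1) + (v - fib (k+5)) := by
          rw [hbd]; omega
        rw [hidx]
        rcases Bool.dichotomy (uSeq (j+1)) with hn | hn
        · have h := hBD (j+1) (v - fib (k+5)) (by rw [hn, if_neg (by simp)]; exact hv')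
          rw [hn, if_neg (by simp)] at h
          rw [h, List.getD_append_right _ _ _ _ (by rw [hP]; omega), hP,
            List.getD_append_right _ _ _ _ (by rw [hQ]; omega), hQ]
          congr 1
          omega
        · have h := hBD (j+1) (v - fib (k+5)) (by rw [hn, if_pos rfl]; omega)
          rw [hn, if_pos rfl] at h
          rw [h, getD_of_prefix (fibWord_prefix_succ (k+2)) (by rw [hP]; omega),
            List.getD_append_right _ _ _ _ (by rw [hP]; omega), hP,
            List.getD_append_right _ _ _ _ (by rw [hQ]; omega), hQ]
          congr 1
          omega
    rcases Nat.lt_or_ge t (fib (k+4) + fib (k+3) - 1) with hT | hT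
    · -- rotation
      left
      refine ⟨t % fib (k+4), Nat.mod_lt _ hppos, fun s hs => ?_⟩
      have h := hcontent (t + s) (by omega)
      rw [hi, Nat.add_assoc, h, U2low k (t+s) (by omega), Nat.mod_add_mod]
    · -- singular word
      right
      have hTeq : t = fib (k+4) + fib (k+3) - 1 := by omega
      intro s hs
      have h := hcontent (t + s) (by omega)
      rw [hi, Nat.add_assoc, h, hTeq, U2high k s hs]

/-! ### Assembly -/

lemma getD_range_map (g : ℕ → Bool) (n s : ℕ) (hs : s < n) :
    ((List.range n).map g).getD s true = g s := by
  rw [List.getD_eq_getElem _ true (by simpa using hs)]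
  simp

lemma range_map_uSeq (k : ℕ) : (List.range (fib (k+2))).map uSeq = fibWord k := by
  apply List.ext_getElem (by simp [fibWord_length])
  intro i h1 h2
  have h3 : i < fib (k+2) := by simpa using h1
  rw [← List.getD_eq_getElem _ true h1, ← List.getD_eq_getElem _ true h2,
    getD_range_map _ _ _ h3, uSeq_eq_fibWord h3]

lemma repeatable_of_rot (k : ℕ) (w : List Bool) (hlen : w.length = fib (k+4))
    (r : ℕ) (hr : r < fib (k+4))
    (hw : ∀ s < fib (k+4), w.getD s true = (fibWord (k+2)).getD ((r+s) % fib (k+4)) true) :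
    Repeatable w := by
  have hppos : 0 < fib (k+4) := fib_pos' (k+2)
  have hmap : (List.range w.length).map uSeq = fibWord (k+2) := by
    rw [hlen]; exact range_map_uSeq (k+2)
  refine ⟨(r : ℤ), fun n => ?_⟩
  unfold periodize
  rw [hmap, hlen, fibWord_length]
  set p := fib (k+4) with hp
  have hpz : ((p : ℤ)) ≠ 0 := by exact_mod_cast hppos.ne'
  have hpz' : (0:ℤ) < (p:ℤ) := by exact_mod_cast hppos
  set m := (n % (p : ℤ)).toNat with hm
  have hm0 : 0 ≤ n % (p:ℤ) := Int.emod_nonneg n hpz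
  have hmlt : m < p := (Int.toNat_lt' hppos).2 (Int.emod_lt_of_pos n hpz')
  rw [hw m hmlt]
  congr 1
  have h1 : (n + (r:ℤ)) % (p:ℤ) = (((m + r) % p : ℕ) : ℤ) := by
    rw [← Int.emod_add_emod, ← Int.toNat_of_nonneg hm0, ← hm, Int.natCast_mod, Nat.cast_add]
  rw [h1, Int.toNat_natCast, Nat.add_comm m r]

lemma fib_lt_fib {a b : ℕ} (h2 : 2 ≤ a) (h : a < b) : fib a < fib b :=
  lt_of_lt_of_le (fib_lt_fib_succ h2) (fib_mono h)

/-- `ω` begins with a cyclic rotation of `fibWord (k+2)`. -/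
def GoodPred (ω : ℕ → Bool) (k : ℕ) : Prop :=
  ∃ r < fib (k+4), ∀ s < fib (k+4),
    ω s = (fibWord (k+2)).getD ((r+s) % fib (k+4)) true

lemma good_or (ω : ℕ → Bool) (hpre : ∀ L : ℕ, ∃ i, ∀ s < L, ω s = uSeq (i + s)) (k : ℕ) :
    GoodPred ω k ∨ GoodPred ω (k+1) := by
  by_contra hcon
  push_neg at hcon
  obtain ⟨hnk, hnk1⟩ := hcon
  have hk : ∀ s < fib (k+4), ω s = (Ysing k).getD s true := by
    obtain ⟨i, hi⟩ := hpre (fib (k+4))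
    rcases classify k i with h | h
    · refine absurd ?_ hnk
      obtain ⟨r, hr, hrot⟩ := h
      exact ⟨r, hr, fun s hs => (hi s hs).trans (hrot s hs)⟩
    · exact fun s hs => (hi s hs).trans (h s hs)
  have hk1 : ∀ s < fib (k+5), ω s = (Ysing (k+1)).getD s true := by
    obtain ⟨i, hi⟩ := hpre (fib (k+5))
    rcases classify (k+1) i with h | h
    · refine absurd ?_ hnk1
      obtain ⟨r, hr, hrot⟩ := h
      exact ⟨r, hr, fun s hs => (hi s hs).trans (hrot s hs)⟩
    · exact fun s hs => (hi s hs).trans (h s hs)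
  have e1 : ω 0 = lastLetter (k+1) := by rw [hk 0 (fib_pos' (k+2))]; rfl
  have e2 : ω 0 = lastLetter (k+2) := by rw [hk1 0 (fib_pos' (k+3))]; rfl
  have halt := lastLetter_alt (k+1)
  rw [← e1, ← e2] at halt
  cases h0 : ω 0 <;> rw [h0] at halt <;> simp at halt


/-- For each `ω` in the one-sided Fibonacci subshift (every finite subword of
`ω` occurs in `u`), there is a strictly increasing subsequence `(F_{k_i})` of the Fibonacci
numbers (convention `F_k = Nat.fib (k+1)`, so `F₁ = 1`, `F₂ = 2`, …) such that each prefix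
of `ω` of length `F_{k_i}` is a subword of `u` and is repeatable. -/
theorem stmt13 (ω : ℕ → Bool)
    (hω : ∀ i L : ℕ, subwordOfU ((List.range L).map fun m => ω (i + m))) :
    ∃ k : ℕ → ℕ, StrictMono k ∧ StrictMono (fun i => Nat.fib (k i + 1)) ∧
      ∀ i, subwordOfU ((List.range (Nat.fib (k i + 1))).map ω) ∧
        Repeatable ((List.range (Nat.fib (k i + 1))).map ω) := by
  classical
  have hzero : (fun m => ω (0 + m)) = ω := funext fun m => by rw [Nat.zero_add]
  have hpre : ∀ L : ℕ, ∃ i, ∀ s < L, ω s = uSeq (i + s) := by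
    intro L
    obtain ⟨i, hi⟩ := hω 0 L
    refine ⟨i, fun s hs => ?_⟩
    have hlen : ((List.range L).map (fun m => ω (0+m))).length = L := by simp
    have h1 := congrArg (fun l => l.getD s true) hi
    rw [hlen] at h1
    rw [getD_range_map _ _ _ hs, getD_range_map _ _ _ hs, Nat.zero_add] at h1
    exact h1
  let step : ℕ → ℕ := fun x => if GoodPred ω (x + 1) then x + 1 else x + 2
  let f : ℕ → ℕ := fun n => Nat.rec (if GoodPred ω 0 then 0 else 1) (fun _ prev => step prev) n
  have hf0 : f 0 = if GoodPred ω 0 then 0 else 1 := rfl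
  have hfs : ∀ n, f (n+1) = step (f n) := fun n => rfl
  have hgood : ∀ n, GoodPred ω (f n) := by
    intro n
    induction n with
    | zero =>
        rw [hf0]
        by_cases h0 : GoodPred ω 0
        · rwa [if_pos h0]
        · rw [if_neg h0]
          rcases good_or ω hpre 0 with h | h
          · exact absurd h h0
          · exact h
    | succ n ih =>
        rw [hfs]
        show GoodPred ω (if GoodPred ω (f n + 1) then f n + 1 else f n + 2)
        by_cases h0 : GoodPred ω (f n + 1)
        · rwa [if_pos h0]
        · rw [if_neg h0]
          rcases good_or ω hpre (f n + 1) with h | h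
          · exact absurd h h0
          · exact h
  have hmono : StrictMono f := strictMono_nat_of_lt_succ (fun n => by
    rw [hfs]
    show f n < if GoodPred ω (f n + 1) then f n + 1 else f n + 2
    split_ifs <;> omega)
  refine ⟨fun i => f i + 3, ?_, ?_, ?_⟩
  · intro a b h
    have := hmono h
    simp only []
    omega
  · intro a b h
    have := hmono h
    show fib (f a + 3 + 1) < fib (f b + 3 + 1)
    exact fib_lt_fib (by omega) (by omega)
  · intro i
    constructor
    · have h := hω 0 (fib (f i + 3 + 1))
      rwa [hzero] at h
    · obtain ⟨r, hr, hrot⟩ := hgood i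
      show Repeatable ((List.range (fib (f i + 3 + 1))).map ω)
      apply repeatable_of_rot (f i) _ (by rw [List.length_map, List.length_range]) r hr
      intro s hs
      rw [getD_range_map _ _ _ hs]
      exact hrot s hs
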